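/- Let A be a commutative ring and 𝔭 a prime ideal of W_n(A) containing p. Then there is a unique prime ideal 𝔮 of A with gh_0^{-1}(𝔮) = 𝔭, and the canonical W_n(A)-algebra map W_n(A)_𝔭 → W_n(A_𝔮) is an isomorphism. -/

import Mathlib

open Function

namespace WittLocAux

variable {p : ℕ} [hp : Fact p.Prime]

theorem ghost_mk {R : Type*} [CommRing R] (f : ℕ → R) (k : ℕ) :
    WittVector.ghostComponent (p := p) k (WittVector.mk p f) =
      ∑ i ∈ Finset.range (k + 1), (p : R) ^ i * f i ^ p ^ (k - i) := by
  rw [WittVector.ghostComponent_apply]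
  have : (WittVector.mk p f).coeff = f := rfl
  rw [this]
  exact aeval_wittPolynomial p ℤ f k

theorem map_mk {R S : Type*} [CommRing R] [CommRing S] (g : R →+* S) (f : ℕ → R) :
    WittVector.map (p := p) g (WittVector.mk p f) = WittVector.mk p fun i => g (f i) := by
  apply WittVector.ext
  intro i
  rw [WittVector.map_coeff, WittVector.coeff_mk, WittVector.coeff_mk]

theorem teich_mul_aux₁ {σ : Type*} (t : MvPolynomial σ ℚ) (f : ℕ → MvPolynomial σ ℚ) :
    WittVector.teichmuller p t * WittVector.mk p f =
      WittVector.mk p fun i => t ^ p ^ i * f i := by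
  apply (WittVector.ghostMap.bijective_of_invertible p _).1
  funext k
  rw [map_mul]
  simp only [Pi.mul_apply, WittVector.ghostMap_apply, WittVector.ghostComponent_teichmuller,
    ghost_mk]
  rw [Finset.mul_sum]
  refine Finset.sum_congr rfl fun i hi => ?_
  rw [Finset.mem_range] at hi
  rw [mul_pow, ← pow_mul, show p ^ i * p ^ (k - i) = p ^ k by
    rw [← pow_add]; congr 1; omega]
  ring

theorem teich_mul_aux₂ {σ : Type*} (t : MvPolynomial σ ℤ) (f : ℕ → MvPolynomial σ ℤ) :
    WittVector.teichmuller p t * WittVector.mk p f =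
      WittVector.mk p fun i => t ^ p ^ i * f i := by
  refine WittVector.map_injective (MvPolynomial.map (Int.castRingHom ℚ))
    (MvPolynomial.map_injective _ Int.cast_injective) ?_
  rw [map_mul, WittVector.map_teichmuller, map_mk, map_mk, teich_mul_aux₁]
  congr 1
  funext i
  rw [map_mul, map_pow]

theorem teich_mul {R : Type*} [CommRing R] (t : R) (x : WittVector p R) :
    WittVector.teichmuller p t * x = WittVector.mk p fun i => t ^ p ^ i * x.coeff i := by
  let φ : MvPolynomial (Option ℕ) ℤ →+* R :=
    (MvPolynomial.aeval (fun o : Option ℕ => o.elim t x.coeff)).toRingHom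
  have key := teich_mul_aux₂ (p := p) (MvPolynomial.X (σ := Option ℕ) (R := ℤ) none)
    (fun i => MvPolynomial.X (some i))
  have h2 := congrArg (WittVector.map φ) key
  rw [map_mul, WittVector.map_teichmuller, map_mk, map_mk] at h2
  have hφn : φ (MvPolynomial.X none) = t := by simp [φ]
  have hφs : ∀ i, φ (MvPolynomial.X (some i)) = x.coeff i := by intro i; simp [φ]
  rw [hφn] at h2
  have h1 : WittVector.mk p (fun i => φ (MvPolynomial.X (some i))) = x := by
    apply WittVector.ext
    intro i
    rw [WittVector.coeff_mk, hφs]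
  rw [h1] at h2
  rw [h2]
  congr 1
  funext i
  rw [map_mul, map_pow, hφn, hφs]

theorem teich_mul_coeff {R : Type*} [CommRing R] (t : R) (x : WittVector p R) (k : ℕ) :
    (WittVector.teichmuller p t * x).coeff k = t ^ p ^ k * x.coeff k := by
  rw [teich_mul, WittVector.coeff_mk]

theorem versch_mul {R : Type*} [CommRing R] (x y : WittVector p R) :
    WittVector.verschiebung x * WittVector.verschiebung y =
      p • WittVector.verschiebung (x * y) := by
  rw [← WittVector.verschiebung_mul_frobenius x (WittVector.verschiebung y),
    WittVector.frobenius_verschiebung]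
  rw [show x * (y * (p : WittVector p R)) = p • (x * y) by
    rw [nsmul_eq_mul]; ring]
  rw [map_nsmul]

theorem iterate_versch_mul {R : Type*} [CommRing R] (k : ℕ) (x y : WittVector p R) :
    (⇑WittVector.verschiebung)^[k] x * (⇑WittVector.verschiebung)^[k] y =
      p ^ k • (⇑WittVector.verschiebung)^[k] (x * y) := by
  induction k generalizing x y with
  | zero => simp
  | succ k ih =>
    rw [iterate_succ_apply', iterate_succ_apply', versch_mul, ih, map_nsmul,
      iterate_succ_apply', smul_smul, pow_succ, mul_comm]

theorem iterate_versch_coeff_lt {R : Type*} [CommRing R] (k : ℕ) (x : WittVector p R)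
    (i : ℕ) (hi : i < k) : ((⇑WittVector.verschiebung)^[k] x).coeff i = 0 := by
  induction k generalizing i with
  | zero => omega
  | succ k ih =>
    rw [iterate_succ_apply']
    cases i with
    | zero => exact WittVector.verschiebung_coeff_zero _
    | succ i => rw [WittVector.verschiebung_coeff_succ]; exact ih i (by omega)

theorem tw_mul_coeff_zero {R : Type*} [CommRing R] {m : ℕ}
    (x y : TruncatedWittVector p (m + 1) R) :
    (x * y).coeff 0 = x.coeff 0 * y.coeff 0 := by
  obtain ⟨x, rfl⟩ := WittVector.truncate_surjective p (m + 1) R x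
  obtain ⟨y, rfl⟩ := WittVector.truncate_surjective p (m + 1) R y
  rw [← map_mul, WittVector.coeff_truncate, WittVector.coeff_truncate,
    WittVector.coeff_truncate]
  exact WittVector.mul_coeff_zero x y

theorem tw_one_coeff_zero {R : Type*} [CommRing R] {m : ℕ} :
    (1 : TruncatedWittVector p (m + 1) R).coeff 0 = 1 := by
  rw [← map_one (WittVector.truncate (p := p) (R := R) (m + 1)), WittVector.coeff_truncate]
  exact WittVector.one_coeff_zero p R

/-- The kernel element of the truncation with top coefficient `a`. -/
noncomputable def tau {R : Type*} [CommRing R] (m : ℕ) (a : R) :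
    TruncatedWittVector p (m + 2) R :=
  WittVector.truncate (m + 2) ((⇑WittVector.verschiebung)^[m + 1]
    (WittVector.mk p fun j => if j = 0 then a else 0))

theorem key_tau {R : Type*} [CommRing R] (m : ℕ) (X Y : WittVector p R)
    (h : X.coeff 0 = Y.coeff 0) :
    WittVector.truncate (m + 2) ((⇑WittVector.verschiebung)^[m + 1] X) =
      WittVector.truncate (m + 2) ((⇑WittVector.verschiebung)^[m + 1] Y) := by
  apply TruncatedWittVector.ext
  intro i
  rw [WittVector.coeff_truncate, WittVector.coeff_truncate]
  rcases lt_or_ge (i : ℕ) (m + 1) with h' | h'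
  · rw [iterate_versch_coeff_lt _ _ _ h', iterate_versch_coeff_lt _ _ _ h']
  · have hi : (i : ℕ) = 0 + (m + 1) := by have := i.isLt; omega
    rw [hi, WittVector.iterate_verschiebung_coeff, WittVector.iterate_verschiebung_coeff, h]

theorem tau_coeff {R : Type*} [CommRing R] (m : ℕ) (a : R) (i : Fin (m + 2)) :
    (tau (p := p) m a).coeff i = if (i : ℕ) = m + 1 then a else 0 := by
  unfold tau
  rw [WittVector.coeff_truncate]
  rcases lt_or_ge (i : ℕ) (m + 1) with h' | h'
  · rw [iterate_versch_coeff_lt _ _ _ h', if_neg (by omega)]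
  · have hi : (i : ℕ) = 0 + (m + 1) := by have := i.isLt; omega
    rw [hi, WittVector.iterate_verschiebung_coeff, if_pos (by omega)]
    simp [WittVector.coeff_mk]

theorem tau_add {R : Type*} [CommRing R] (m : ℕ) (a b : R) :
    tau (p := p) m a + tau m b = tau m (a + b) := by
  unfold tau
  rw [← map_add, ← iterate_map_add]
  apply key_tau
  rw [WittVector.add_coeff_zero]
  simp [WittVector.coeff_mk]

theorem tau_zero {R : Type*} [CommRing R] (m : ℕ) : tau (p := p) m (0 : R) = 0 := by
  unfold tau
  rw [show (WittVector.mk p fun j : ℕ => if j = 0 then (0 : R) else 0) = 0 by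
    apply WittVector.ext; intro i; simp [WittVector.coeff_mk, WittVector.zero_coeff]]
  rw [iterate_map_zero, map_zero]

theorem tau_nsmul {R : Type*} [CommRing R] (m k : ℕ) (a : R) :
    p ^ k • tau (p := p) m a = tau m ((p : R) ^ k * a) := by
  unfold tau
  rw [← map_nsmul, ← iterate_map_nsmul]
  apply key_tau
  have h0 := map_nsmul (WittVector.constantCoeff (p := p) (R := R)) (p ^ k)
    (WittVector.mk p fun j => if j = 0 then a else 0)
  simp only [WittVector.constantCoeff_apply] at h0
  rw [h0]
  simp [WittVector.coeff_mk, nsmul_eq_mul]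

theorem tau_mul {R : Type*} [CommRing R] (m : ℕ) (a b : R) :
    tau (p := p) m a * tau m b = p ^ (m + 1) • tau m (a * b) := by
  unfold tau
  rw [← map_mul, iterate_versch_mul, map_nsmul]
  congr 1
  apply key_tau
  rw [WittVector.mul_coeff_zero]
  simp [WittVector.coeff_mk]

theorem eq_tau {R : Type*} [CommRing R] (m : ℕ) (ε : TruncatedWittVector p (m + 2) R)
    (hε : TruncatedWittVector.truncate (show m + 1 ≤ m + 2 by omega) ε = 0) :
    ε = tau m (ε.coeff ⟨m + 1, by omega⟩) := by
  apply TruncatedWittVector.ext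
  intro i
  rw [tau_coeff]
  rcases eq_or_ne (i : ℕ) (m + 1) with h' | h'
  · rw [if_pos h']
    congr 1
    exact Fin.ext h'
  · rw [if_neg h']
    have hlt : (i : ℕ) < m + 1 := by have := i.isLt; omega
    have h2 := TruncatedWittVector.coeff_truncate (show m + 1 ≤ m + 2 by omega)
      ⟨(i : ℕ), hlt⟩ ε
    rw [hε] at h2
    rw [show Fin.castLE (show m + 1 ≤ m + 2 by omega) ⟨(i : ℕ), hlt⟩ = i from Fin.ext rfl] at h2
    rw [← h2, TruncatedWittVector.coeff_zero]

theorem isUnit_of_coeff_zero (m : ℕ) {R : Type*} [CommRing R]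
    (hp1 : ∀ r : R, IsUnit (1 + (p : R) * r)) (x : TruncatedWittVector p (m + 1) R)
    (hx : IsUnit (x.coeff 0)) : IsUnit x := by
  induction m with
  | zero =>
    obtain ⟨b, hb⟩ := isUnit_iff_exists_inv.mp hx
    refine IsUnit.of_mul_eq_one (WittVector.truncate 1 (WittVector.mk p fun _ => b)) ?_
    apply TruncatedWittVector.ext
    intro i
    have hi : i = 0 := Fin.ext (by simp only [Fin.val_zero]; have := i.isLt; omega)
    subst hi
    rw [tw_mul_coeff_zero, tw_one_coeff_zero, WittVector.coeff_truncate]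
    rw [show (WittVector.mk p fun _ : ℕ => b).coeff ↑(0 : Fin 1) = b from rfl]
    exact hb
  | succ m ih =>
    have h21 : m + 1 ≤ m + 2 := by omega
    have hx' : IsUnit ((TruncatedWittVector.truncate h21 x).coeff 0) := by
      rw [TruncatedWittVector.coeff_truncate]
      exact hx
    obtain ⟨yb, hyb⟩ := isUnit_iff_exists_inv.mp (ih (TruncatedWittVector.truncate h21 x) hx')
    obtain ⟨y, rfl⟩ := TruncatedWittVector.truncate_surjective h21 yb
    have hker : TruncatedWittVector.truncate h21 (x * y - 1) = 0 := by
      rw [map_sub, map_mul, map_one, hyb, sub_self]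
    set a := (x * y - 1).coeff ⟨m + 1, by omega⟩ with ha
    have hxy : x * y = 1 + tau m a := by
      have h := eq_tau m (x * y - 1) hker
      linear_combination h
    obtain ⟨v, hv⟩ := isUnit_iff_exists_inv.mp (hp1 ((p : R) ^ m * a))
    have hz : a + (-(a * v) + (p : R) ^ (m + 1) * (a * -(a * v))) = 0 := by
      linear_combination (-a) * hv
    have hmain : (1 + tau (p := p) m a) * (1 + tau m (-(a * v))) = 1 := by
      have expand : (1 + tau (p := p) m a) * (1 + tau m (-(a * v))) =
          1 + (tau m a + (tau m (-(a * v)) + tau m a * tau m (-(a * v)))) := by ring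
      rw [expand, tau_mul, tau_nsmul, tau_add, tau_add, hz, tau_zero, add_zero]
    exact IsUnit.of_mul_eq_one (a := x) (y * (1 + tau m (-(a * v))))
      (by rw [← mul_assoc, hxy, hmain])

end WittLocAux




open WittLocAux

/-- Let `A` be a commutative ring and `𝔭` a prime ideal of `W_n(A)`
containing `p` (`p`-typical Witt vectors, normalized indexing:
`W_n = TruncatedWittVector p (n+1)`). Then there is a unique prime ideal `𝔮` of `A` with
`gh_0⁻¹(𝔮) = 𝔭`, and the canonical `W_n(A)`-algebra map `W_n(A)_𝔭 → W_n(A_𝔮)` is an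
isomorphism. Here `gh_0` is characterized via the truncation map by the zeroth ghost
component, `W_n(A) → W_n(A_𝔮)` is the functorial map induced by `A → A_𝔮` (characterized
via truncation by `WittVector.map`), and the `W_n(A)`-algebra structure on the localization
is the canonical one. -/
theorem localization_of_witt_at_prime_containing_p (p : ℕ) [Fact p.Prime] (n : ℕ)
    (A : Type) [CommRing A]
    (g0 : TruncatedWittVector p (n + 1) A →+* A)
    (hg0 : ∀ x : WittVector p A,
      g0 (WittVector.truncate (n + 1) x) = WittVector.ghostComponent 0 x)
    (𝔭 : Ideal (TruncatedWittVector p (n + 1) A)) [𝔭.IsPrime]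
    (hp𝔭 : (p : TruncatedWittVector p (n + 1) A) ∈ 𝔭) :
    (∃! q : { q : Ideal A // q.IsPrime }, Ideal.comap g0 q.1 = 𝔭) ∧
    ∀ (𝔮 : Ideal A) [𝔮.IsPrime], 𝔭 = Ideal.comap g0 𝔮 →
      ∀ mapT : TruncatedWittVector p (n + 1) A →+*
          TruncatedWittVector p (n + 1) (Localization.AtPrime 𝔮),
        (∀ x : WittVector p A, mapT (WittVector.truncate (n + 1) x) =
          WittVector.truncate (n + 1)
            (WittVector.map (algebraMap A (Localization.AtPrime 𝔮)) x)) →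
        (∃! F : Localization.AtPrime 𝔭 →+*
            TruncatedWittVector p (n + 1) (Localization.AtPrime 𝔮),
          F.comp (algebraMap (TruncatedWittVector p (n + 1) A) (Localization.AtPrime 𝔭)) =
            mapT) ∧
        ∀ F : Localization.AtPrime 𝔭 →+*
            TruncatedWittVector p (n + 1) (Localization.AtPrime 𝔮),
          F.comp (algebraMap (TruncatedWittVector p (n + 1) A) (Localization.AtPrime 𝔭)) =
            mapT → Function.Bijective F := by
  classical
  have hpprime : Fact p.Prime := ‹_›
  -- `g0` is the zeroth coefficient
  have hcoe : ∀ x : TruncatedWittVector p (n + 1) A, g0 x = x.coeff 0 := by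
    intro x
    obtain ⟨x', rfl⟩ := WittVector.truncate_surjective p (n + 1) A x
    rw [hg0, WittVector.coeff_truncate, WittVector.ghostComponent_apply, wittPolynomial_zero]
    simp
  have hsurj : Function.Surjective g0 := by
    intro a
    refine ⟨WittVector.truncate (n + 1) (WittVector.mk p fun _ => a), ?_⟩
    rw [hcoe, WittVector.coeff_truncate]
    rfl
  have hker : RingHom.ker g0 ≤ 𝔭 := by
    intro x hx
    rw [RingHom.mem_ker, hcoe] at hx
    obtain ⟨x', rfl⟩ := WittVector.truncate_surjective p (n + 1) A x
    rw [WittVector.coeff_truncate] at hx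
    set x'' := WittVector.mk p fun j => x'.coeff (j + 1) with hx''
    have hV : WittVector.verschiebung x'' = x' := by
      apply WittVector.ext
      intro i
      cases i with
      | zero => rw [WittVector.verschiebung_coeff_zero]; exact hx.symm
      | succ i => rw [WittVector.verschiebung_coeff_succ]; rfl
    have hsq : x' * x' = p • WittVector.verschiebung (x'' * x'') := by
      rw [← hV, versch_mul]
    have hmemsq : WittVector.truncate (n + 1) x' * WittVector.truncate (n + 1) x' ∈ 𝔭 := by
      rw [← map_mul, hsq, map_nsmul, nsmul_eq_mul]
      exact Ideal.mul_mem_right _ _ hp𝔭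
    exact (inferInstance : 𝔭.IsPrime).mem_of_pow_mem 2 (by rwa [pow_two])
  constructor
  · -- existence and uniqueness of 𝔮
    have hprime : (Ideal.map g0 𝔭).IsPrime := Ideal.map_isPrime_of_surjective hsurj hker
    have hcomap : Ideal.comap g0 (Ideal.map g0 𝔭) = 𝔭 := by
      rw [Ideal.comap_map_of_surjective g0 hsurj]
      exact sup_eq_left.mpr (by rw [← RingHom.ker_eq_comap_bot]; exact hker)
    refine ⟨⟨Ideal.map g0 𝔭, hprime⟩, hcomap, ?_⟩
    rintro ⟨q, hq⟩ hq2
    apply Subtype.ext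
    simp only at hq2 ⊢
    rw [← hq2, Ideal.map_comap_of_surjective g0 hsurj]
  · intro 𝔮 h𝔮 h𝔭eq mapT hmapT
    have hmem : ∀ z : TruncatedWittVector p (n + 1) A, z ∈ 𝔭 ↔ g0 z ∈ 𝔮 := by
      intro z
      rw [h𝔭eq]
      exact Iff.rfl
    have hp𝔮 : (p : A) ∈ 𝔮 := by
      have h1 := (hmem _).mp hp𝔭
      rwa [map_natCast] at h1
    have hploc : (p : Localization.AtPrime 𝔮) ∈
        IsLocalRing.maximalIdeal (Localization.AtPrime 𝔮) := by
      have h1 := (IsLocalization.AtPrime.to_map_mem_maximal_iff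
        (Localization.AtPrime 𝔮) 𝔮 (p : A)).mpr hp𝔮
      rwa [map_natCast] at h1
    have hp1 : ∀ r : Localization.AtPrime 𝔮,
        IsUnit (1 + (p : Localization.AtPrime 𝔮) * r) := by
      intro r
      by_contra h
      have hmem' : 1 + (p : Localization.AtPrime 𝔮) * r ∈
          IsLocalRing.maximalIdeal (Localization.AtPrime 𝔮) :=
        (IsLocalRing.mem_maximalIdeal _).mpr h
      have h1 : (1 : Localization.AtPrime 𝔮) ∈
          IsLocalRing.maximalIdeal (Localization.AtPrime 𝔮) := by
        have h2 := (IsLocalRing.maximalIdeal (Localization.AtPrime 𝔮)).sub_mem hmem'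
          (Ideal.mul_mem_right r _ hploc)
        simpa using h2
      exact (IsLocalRing.maximalIdeal.isMaximal _).ne_top (Ideal.eq_top_of_isUnit_mem _ h1 isUnit_one)
    have hmapTc : ∀ (x : TruncatedWittVector p (n + 1) A) (i : Fin (n + 1)),
        (mapT x).coeff i = algebraMap A (Localization.AtPrime 𝔮) (x.coeff i) := by
      intro x i
      obtain ⟨x', rfl⟩ := WittVector.truncate_surjective p (n + 1) A x
      rw [hmapT, WittVector.coeff_truncate, WittVector.coeff_truncate, WittVector.map_coeff]
    have hunits : ∀ z : 𝔭.primeCompl, IsUnit (mapT z) := by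
      rintro ⟨z, hz⟩
      apply isUnit_of_coeff_zero n hp1
      rw [hmapTc]
      have hz𝔮 : z.coeff 0 ∉ 𝔮 := by
        rw [← hcoe]
        exact fun hc => hz ((hmem z).mpr hc)
      exact IsLocalization.map_units (Localization.AtPrime 𝔮)
        (⟨z.coeff 0, hz𝔮⟩ : 𝔮.primeCompl)
    have hout𝔮 : ∀ z : TruncatedWittVector p (n + 1) (Localization.AtPrime 𝔮),
        WittVector.truncate (n + 1) z.out = z := by
      intro z
      apply TruncatedWittVector.ext
      intro i
      rw [WittVector.coeff_truncate, TruncatedWittVector.coeff_out]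
    have houtA : ∀ z : TruncatedWittVector p (n + 1) A,
        WittVector.truncate (n + 1) z.out = z := by
      intro z
      apply TruncatedWittVector.ext
      intro i
      rw [WittVector.coeff_truncate, TruncatedWittVector.coeff_out]
    constructor
    · -- existence and uniqueness of F
      refine ⟨IsLocalization.lift (M := 𝔭.primeCompl) hunits,
        IsLocalization.lift_comp hunits, ?_⟩
      intro F hF
      exact IsLocalization.ringHom_ext 𝔭.primeCompl
        (hF.trans (IsLocalization.lift_comp hunits).symm)
    · -- bijectivity
      intro F hF
      have hFa : ∀ z : TruncatedWittVector p (n + 1) A,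
          F (algebraMap _ (Localization.AtPrime 𝔭) z) = mapT z := fun z =>
        RingHom.congr_fun hF z
      constructor
      · -- injectivity
        rw [injective_iff_map_eq_zero]
        intro z hz
        obtain ⟨⟨a, s⟩, rfl⟩ := IsLocalization.mk'_surjective 𝔭.primeCompl z
        have hma : mapT a = 0 := by
          have h1 : F (IsLocalization.mk' (Localization.AtPrime 𝔭) a s *
              algebraMap _ (Localization.AtPrime 𝔭) (s : TruncatedWittVector p (n + 1) A)) = 0 := by
            rw [map_mul, hz, zero_mul]
          rw [IsLocalization.mk'_spec, hFa] at h1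
          exact h1
        have hann : ∀ i : Fin (n + 1), ∃ t : 𝔮.primeCompl, (t : A) * a.coeff i = 0 := by
          intro i
          have h2 : (mapT a).coeff i = 0 := by rw [hma, TruncatedWittVector.coeff_zero]
          rw [hmapTc] at h2
          exact (IsLocalization.map_eq_zero_iff 𝔮.primeCompl _ _).mp h2
        choose t ht using hann
        set T : A := ∏ i : Fin (n + 1), (t i : A) with hT
        have hTmem : T ∈ 𝔮.primeCompl := Submonoid.prod_mem _ fun i _ => (t i).2
        have hTa : WittVector.teichmuller p T * a.out = 0 := by
          apply WittVector.ext
          intro i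
          rw [teich_mul_coeff, WittVector.zero_coeff]
          by_cases hi : i < n + 1
          · have hco : a.out.coeff i = a.coeff ⟨i, hi⟩ :=
              TruncatedWittVector.coeff_out a ⟨i, hi⟩
            rw [hco]
            obtain ⟨c, hc⟩ : ∃ c, T ^ p ^ i = (t ⟨i, hi⟩ : A) * c := by
              refine ⟨(∏ j ∈ Finset.univ.erase ⟨i, hi⟩, (t j : A)) * T ^ (p ^ i - 1), ?_⟩
              have h6 : ((t ⟨i, hi⟩ : A)) * ∏ j ∈ Finset.univ.erase ⟨i, hi⟩, (t j : A) = T := by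
                rw [hT]; exact Finset.mul_prod_erase Finset.univ (fun j => ((t j : A))) (Finset.mem_univ (⟨i, hi⟩ : Fin (n + 1)))
              rw [← mul_assoc, h6]
              conv_lhs => rw [show p ^ i = (p ^ i - 1) + 1 by
                have := pow_pos hpprime.out.pos i; omega]
              rw [pow_succ]
              ring
            rw [hc]
            linear_combination c * (ht ⟨i, hi⟩)
          · have h3 : a.out.coeff i = 0 := by
              have h4 : a.out.coeff i = if h : i < n + 1 then a.coeff ⟨i, h⟩ else 0 := rfl
              rw [h4, dif_neg hi]
            rw [h3, mul_zero]
        have h0 : WittVector.truncate (n + 1) (WittVector.teichmuller p T) * a = 0 := by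
          rw [← houtA a, ← map_mul, hTa, map_zero]
        have hTP : WittVector.truncate (n + 1) (WittVector.teichmuller p T) ∈ 𝔭.primeCompl := by
          intro hcm
          apply hTmem
          have h5 := (hmem _).mp hcm
          rw [hcoe, WittVector.coeff_truncate] at h5
          simp only [Fin.val_zero] at h5
          rwa [WittVector.teichmuller_coeff_zero] at h5
        have hmul0 : algebraMap _ (Localization.AtPrime 𝔭)
            (WittVector.truncate (n + 1) (WittVector.teichmuller p T)) *
            algebraMap _ (Localization.AtPrime 𝔭) a = 0 := by
          rw [← map_mul, h0, map_zero]
        have hu := IsLocalization.map_units (Localization.AtPrime 𝔭)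
          (⟨_, hTP⟩ : 𝔭.primeCompl)
        have ha0 : algebraMap _ (Localization.AtPrime 𝔭) a = 0 :=
          hu.mul_right_eq_zero.mp hmul0
        have hs := IsLocalization.map_units (Localization.AtPrime 𝔭) s
        have hspec := IsLocalization.mk'_spec (Localization.AtPrime 𝔭) a s
        exact hs.mul_left_eq_zero.mp (by rw [hspec, ha0])
      · -- surjectivity
        intro w
        have hsur : ∀ i : Fin (n + 1), ∃ (a : A) (s : 𝔮.primeCompl),
            w.coeff i * algebraMap A (Localization.AtPrime 𝔮) (s : A) =
              algebraMap A (Localization.AtPrime 𝔮) a := by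
          intro i
          obtain ⟨⟨a, s⟩, h⟩ := IsLocalization.surj 𝔮.primeCompl (w.coeff i)
          exact ⟨a, s, h⟩
        choose aa ss hws using hsur
        set S : A := ∏ i : Fin (n + 1), (ss i : A) with hS
        have hSmem : S ∈ 𝔮.primeCompl := Submonoid.prod_mem _ fun i _ => (ss i).2
        set c : Fin (n + 1) → A := fun i =>
          aa i * (∏ j ∈ Finset.univ.erase i, (ss j : A)) * S ^ (p ^ (i : ℕ) - 1) with hcdef
        set X : WittVector p A :=
          WittVector.mk p (fun i => if h : i < n + 1 then c ⟨i, h⟩ else 0) with hX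
        have hkey : WittVector.truncate (n + 1)
            (WittVector.map (algebraMap A (Localization.AtPrime 𝔮)) X) =
            WittVector.truncate (n + 1)
              (WittVector.teichmuller p (algebraMap A (Localization.AtPrime 𝔮) S) * w.out) := by
          apply TruncatedWittVector.ext
          intro i
          rw [WittVector.coeff_truncate, WittVector.coeff_truncate, WittVector.map_coeff,
            teich_mul_coeff]
          have hXc : X.coeff ↑i = c i := by
            have h4 : X.coeff ↑i = if h : (i : ℕ) < n + 1 then c ⟨(i : ℕ), h⟩ else 0 := rfl
            rw [h4, dif_pos i.isLt]
          rw [hXc, TruncatedWittVector.coeff_out]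
          have hprod : (ss i : A) * ∏ j ∈ Finset.univ.erase i, (ss j : A) = S := by
            rw [hS]
            exact Finset.mul_prod_erase Finset.univ (fun j => ((ss j : A))) (Finset.mem_univ i)
          have hpow : (algebraMap A (Localization.AtPrime 𝔮) S) ^ p ^ (i : ℕ) =
              algebraMap A (Localization.AtPrime 𝔮) S *
                (algebraMap A (Localization.AtPrime 𝔮) S) ^ (p ^ (i : ℕ) - 1) := by
            conv_lhs => rw [show p ^ (i : ℕ) = 1 + (p ^ (i : ℕ) - 1) by
              have := pow_pos hpprime.out.pos (i : ℕ); omega]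
            rw [pow_add, pow_one]
          rw [hcdef]
          simp only [map_mul, map_pow]
          rw [← hws i, hpow, ← hprod, map_mul]
          ring
        have hσ : WittVector.truncate (n + 1) (WittVector.teichmuller p S) ∈ 𝔭.primeCompl := by
          intro hcm
          apply hSmem
          have h5 := (hmem _).mp hcm
          rw [hcoe, WittVector.coeff_truncate] at h5
          simp only [Fin.val_zero] at h5
          rwa [WittVector.teichmuller_coeff_zero] at h5
        have hws2 : mapT (WittVector.truncate (n + 1) X) =
            w * mapT (WittVector.truncate (n + 1) (WittVector.teichmuller p S)) := by
          rw [hmapT, hmapT, hkey, WittVector.map_teichmuller]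
          rw [mul_comm (WittVector.teichmuller p (algebraMap A (Localization.AtPrime 𝔮) S)) w.out,
            map_mul, hout𝔮 w]
        set σ := WittVector.truncate (n + 1) (WittVector.teichmuller p S) with hσdef
        refine ⟨IsLocalization.mk' (Localization.AtPrime 𝔭)
          (WittVector.truncate (n + 1) X) (⟨σ, hσ⟩ : 𝔭.primeCompl), ?_⟩
        have hu : IsUnit (mapT σ) := hunits ⟨σ, hσ⟩
        have hspec := IsLocalization.mk'_spec (Localization.AtPrime 𝔭)
          (WittVector.truncate (n + 1) X) (⟨σ, hσ⟩ : 𝔭.primeCompl)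
        have h2 := congrArg F hspec
        rw [map_mul, hFa, hFa, hws2] at h2
        exact hu.mul_right_cancel h2
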